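/- arXiv:2402.06369 — 7 statements merged into one kernel-verified Lean document; each statement's English description precedes it below -/
import Mathlib

section
/- Let X be a real Banach space, θ = (k_r) a lacunary sequence, (x_k) a sequence in X and L ∈ X. If (x_k) is N_θ-summable to L, then (x_k) is lacunary statistically convergent (S_θ-convergent) to L. -/
open Filter Finset
open scoped Classical

/-- `θ` is a lacunary sequence: `θ 0 = 0`, `θ` is strictly increasing and
`h_r = θ (r+1) - θ r → ∞`.  (Intervals `I_r = (θ r, θ (r+1)]`.) -/
def IsLacunary (θ : ℕ → ℕ) : Prop :=
  θ 0 = 0 ∧ StrictMono θ ∧ Tendsto (fun r => θ (r + 1) - θ r) atTop atTop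

/-- `x` is strongly lacunary (`N_θ`) summable to `L`. -/
def NthetaSummable {X : Type*} [NormedAddCommGroup X] (θ : ℕ → ℕ) (x : ℕ → X) (L : X) : Prop :=
  Tendsto (fun r => (1 / (θ (r + 1) - θ r : ℝ)) * ∑ k ∈ Finset.Ioc (θ r) (θ (r + 1)), ‖x k - L‖)
    atTop (nhds 0)

/-- `x` is lacunary statistically (`S_θ`) convergent to `L`. -/
def SthetaConvergent {X : Type*} [NormedAddCommGroup X] (θ : ℕ → ℕ) (x : ℕ → X) (L : X) : Prop :=
  ∀ ε > (0 : ℝ),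
    Tendsto (fun r => (1 / (θ (r + 1) - θ r : ℝ)) *
      (((Finset.Ioc (θ r) (θ (r + 1))).filter (fun k => ε ≤ ‖x k - L‖)).card : ℝ))
      atTop (nhds 0)

/-- `N_θ`-summability implies `S_θ`-convergence. -/
theorem nthetaSummable_imp_sthetaConvergent {X : Type*} [NormedAddCommGroup X] [NormedSpace ℝ X]
    [CompleteSpace X] (θ : ℕ → ℕ) (hθ : IsLacunary θ) (x : ℕ → X) (L : X)
    (hx : NthetaSummable θ x L) : SthetaConvergent θ x L := by
  intro ε hε
  have hg : Tendsto (fun r => (1 / ε) *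
      ((1 / (θ (r + 1) - θ r : ℝ)) * ∑ k ∈ Finset.Ioc (θ r) (θ (r + 1)), ‖x k - L‖))
      atTop (nhds 0) := by
    simpa using hx.const_mul (1 / ε)
  refine squeeze_zero (fun r => ?_) (fun r => ?_) hg
  · have h1 : (0:ℝ) ≤ (θ (r + 1) : ℝ) - θ r := by
      have : θ r ≤ θ (r+1) := (hθ.2.1.monotone (Nat.le_succ r))
      exact sub_nonneg.mpr (by exact_mod_cast this)
    positivity
  · have hpos : (0:ℝ) < (θ (r + 1) : ℝ) - θ r := by
      have := (hθ.2.1 (Nat.lt_succ_self r))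
      have : θ r < θ (r+1) := this
      exact sub_pos.mpr (by exact_mod_cast this)
    have key : ε * (((Finset.Ioc (θ r) (θ (r + 1))).filter (fun k => ε ≤ ‖x k - L‖)).card : ℝ)
        ≤ ∑ k ∈ Finset.Ioc (θ r) (θ (r + 1)), ‖x k - L‖ := by
      calc ε * (((Finset.Ioc (θ r) (θ (r + 1))).filter (fun k => ε ≤ ‖x k - L‖)).card : ℝ)
          = ∑ k ∈ (Finset.Ioc (θ r) (θ (r + 1))).filter (fun k => ε ≤ ‖x k - L‖), ε := by
            rw [Finset.sum_const, nsmul_eq_mul, mul_comm]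
        _ ≤ ∑ k ∈ (Finset.Ioc (θ r) (θ (r + 1))).filter (fun k => ε ≤ ‖x k - L‖), ‖x k - L‖ :=
            Finset.sum_le_sum (fun k hk => (Finset.mem_filter.mp hk).2)
        _ ≤ ∑ k ∈ Finset.Ioc (θ r) (θ (r + 1)), ‖x k - L‖ :=
            Finset.sum_le_sum_of_subset_of_nonneg (Finset.filter_subset _ _)
              (fun k _ _ => norm_nonneg _)
    calc (1 / ((θ (r + 1) : ℝ) - θ r)) *
          (((Finset.Ioc (θ r) (θ (r + 1))).filter (fun k => ε ≤ ‖x k - L‖)).card : ℝ)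
          ≤ (1 / ((θ (r + 1) : ℝ) - θ r)) *
            ((1/ε) * ∑ k ∈ Finset.Ioc (θ r) (θ (r + 1)), ‖x k - L‖) := by
            apply mul_le_mul_of_nonneg_left _ (by positivity)
            rw [one_div ε, ← div_eq_inv_mul, le_div_iff₀ hε, mul_comm]
            exact key
        _ = (1/ε) * ((1 / ((θ (r + 1) : ℝ) - θ r)) *
            ∑ k ∈ Finset.Ioc (θ r) (θ (r + 1)), ‖x k - L‖) := by ring
end

section
/- Let X be a real Banach space, θ = (k_r) a lacunary sequence, (x_k) a bounded sequence in X and L ∈ X. If (x_k) is lacunary statistically convergent (S_θ-convergent) to L, then (x_k) is N_θ-summable to L. -/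
open Filter Finset
open scoped Classical

/-- For bounded sequences, `S_θ`-convergence implies `N_θ`-summability. -/
theorem sthetaConvergent_imp_nthetaSummable_of_bounded {X : Type*} [NormedAddCommGroup X]
    [NormedSpace ℝ X] [CompleteSpace X] (θ : ℕ → ℕ) (hθ : IsLacunary θ) (x : ℕ → X) (L : X)
    (hbdd : ∃ M > (0 : ℝ), ∀ k, ‖x k‖ ≤ M)
    (hx : SthetaConvergent θ x L) : NthetaSummable θ x L := by
  obtain ⟨M, hM, hMx⟩ := hbdd
  obtain ⟨h0, hmono, htop⟩ := hθ
  set C : ℝ := M + ‖L‖ + 1 with hC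
  have hCpos : 0 < C := by positivity
  have hbound : ∀ k, ‖x k - L‖ ≤ C := fun k => by
    calc ‖x k - L‖ ≤ ‖x k‖ + ‖L‖ := norm_sub_le _ _
    _ ≤ M + ‖L‖ + 1 := by linarith [hMx k]
  rw [NthetaSummable, NormedAddCommGroup.tendsto_nhds_zero]
  intro ε hε
  have hε2 : (0 : ℝ) < ε / 2 := by linarith
  -- eventually the density of big terms is small
  have h1 := (hx (ε/2) hε2).eventually (eventually_lt_nhds (show (0:ℝ) < ε/(2*C) by positivity))
  -- eventually h_r ≥ 1
  have h2 : ∀ᶠ r in atTop, 1 ≤ θ (r+1) - θ r := htop.eventually_ge_atTop 1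
  filter_upwards [h1, h2] with r hr1 hr2
  have hcast : ((θ (r+1) : ℕ) : ℝ) - ((θ r : ℕ) : ℝ) = ((θ (r+1) - θ r : ℕ) : ℝ) :=
    (Nat.cast_sub (hmono (Nat.lt_succ_self r)).le).symm
  rw [hcast] at hr1 ⊢
  have hpos : (0:ℝ) < (θ (r+1) - θ r : ℕ) := by exact_mod_cast hr2
  set h : ℝ := ((θ (r+1) - θ r : ℕ) : ℝ) with hh
  set I := Finset.Ioc (θ r) (θ (r+1)) with hI
  set B := I.filter (fun k => ε/2 ≤ ‖x k - L‖) with hB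
  have hcardI : (I.card : ℝ) = h := by
    simp [hI, hh, Nat.card_Ioc]
  have hsum : ∑ k ∈ I, ‖x k - L‖ ≤ C * B.card + (ε/2) * h := by
    have hsplit : ∑ k ∈ I, ‖x k - L‖ =
        ∑ k ∈ B, ‖x k - L‖ + ∑ k ∈ I.filter (fun k => ¬ (ε/2 ≤ ‖x k - L‖)), ‖x k - L‖ := by
      rw [hB, Finset.sum_filter_add_sum_filter_not]
    rw [hsplit]
    have t1 : ∑ k ∈ B, ‖x k - L‖ ≤ C * B.card := by
      calc ∑ k ∈ B, ‖x k - L‖ ≤ ∑ _k ∈ B, C := Finset.sum_le_sum (fun k _ => hbound k)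
      _ = C * B.card := by rw [Finset.sum_const, nsmul_eq_mul, mul_comm]
    have t2 : ∑ k ∈ I.filter (fun k => ¬ (ε/2 ≤ ‖x k - L‖)), ‖x k - L‖ ≤ (ε/2) * h := by
      calc ∑ k ∈ I.filter (fun k => ¬ (ε/2 ≤ ‖x k - L‖)), ‖x k - L‖
          ≤ ∑ _k ∈ I.filter (fun k => ¬ (ε/2 ≤ ‖x k - L‖)), (ε/2) :=
            Finset.sum_le_sum (fun k hk => le_of_not_ge (Finset.mem_filter.mp hk).2)
      _ = (ε/2) * (I.filter (fun k => ¬ (ε/2 ≤ ‖x k - L‖))).card := by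
            rw [Finset.sum_const, nsmul_eq_mul, mul_comm]
      _ ≤ (ε/2) * I.card := by
            have := Finset.card_filter_le I (fun k => ¬ (ε/2 ≤ ‖x k - L‖))
            have : ((I.filter (fun k => ¬ (ε/2 ≤ ‖x k - L‖))).card : ℝ) ≤ I.card := by
              exact_mod_cast this
            nlinarith
      _ = (ε/2) * h := by rw [hcardI]
    exact add_le_add t1 t2
  have hsumnn : (0:ℝ) ≤ ∑ k ∈ I, ‖x k - L‖ :=
    Finset.sum_nonneg (fun k _ => norm_nonneg _)
  have hval : (1 / h) * ∑ k ∈ I, ‖x k - L‖ ≤ C * ((1 / h) * B.card) + ε/2 := by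
    rw [one_div, inv_mul_le_iff₀ hpos]
    calc ∑ k ∈ I, ‖x k - L‖ ≤ C * B.card + (ε/2) * h := hsum
    _ = (C * (h⁻¹ * B.card) + ε/2) * h := by field_simp
    _ = h * (C * (h⁻¹ * B.card) + ε/2) := mul_comm _ _
  have hfnn : (0:ℝ) ≤ (1 / h) * ∑ k ∈ I, ‖x k - L‖ := by positivity
  have hbig : (1 / h) * (B.card : ℝ) < ε/(2*C) := hr1
  rw [Real.norm_of_nonneg hfnn]
  calc (1 / h) * ∑ k ∈ I, ‖x k - L‖ ≤ C * ((1 / h) * B.card) + ε/2 := hval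
  _ < C * (ε/(2*C)) + ε/2 := by
      have hnn : (0:ℝ) ≤ (1/h) * B.card := by positivity
      nlinarith
  _ = ε := by field_simp; ring
end

section
/- Let X be a real Banach space and θ = (k_r) a lacunary sequence. If a sequence (x_k) in X is lacunary statistically convergent (S_θ-convergent) to some L ∈ X, then (x_k) is lacunary statistically Cauchy (S_θ-Cauchy): there exists a selection of indices k'(r) ∈ I_r for every r ∈ ℕ such that lim_{r→∞} x_{k'(r)} = L in norm for some L ∈ X, and for every ε > 0, lim_{r→∞} (1/h_r)|{k ∈ I_r : ‖x_k − x_{k'(r)}‖ ≥ ε}| = 0. -/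
open Filter Finset
open scoped Classical

/-- `x` is lacunary statistically (`S_θ`) Cauchy. -/
def SthetaCauchy {X : Type*} [NormedAddCommGroup X] (θ : ℕ → ℕ) (x : ℕ → X) : Prop :=
  ∃ (k : ℕ → ℕ) (L : X), (∀ r, k r ∈ Finset.Ioc (θ r) (θ (r + 1))) ∧
    Tendsto (fun r => x (k r)) atTop (nhds L) ∧
    ∀ ε > (0 : ℝ),
      Tendsto (fun r => (1 / (θ (r + 1) - θ r : ℝ)) *
        (((Finset.Ioc (θ r) (θ (r + 1))).filter (fun j => ε ≤ ‖x j - x (k r)‖)).card : ℝ))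
        atTop (nhds 0)

/-- An `S_θ`-convergent sequence is `S_θ`-Cauchy. -/
theorem sthetaConvergent_imp_sthetaCauchy {X : Type*} [NormedAddCommGroup X] [NormedSpace ℝ X]
    [CompleteSpace X] (θ : ℕ → ℕ) (hθ : IsLacunary θ) (x : ℕ → X)
    (hx : ∃ L : X, SthetaConvergent θ x L) : SthetaCauchy θ x := by
  obtain ⟨L, hL⟩ := hx
  obtain ⟨h0, hmono, hh⟩ := hθ
  have hlt : ∀ r, θ r < θ (r + 1) := fun r => hmono (Nat.lt_succ_self r)
  have hne : ∀ r, (Finset.Ioc (θ r) (θ (r + 1))).Nonempty :=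
    fun r => ⟨θ (r + 1), Finset.mem_Ioc.2 ⟨hlt r, le_rfl⟩⟩
  have key := fun r => Finset.exists_min_image _ (fun j => ‖x j - L‖) (hne r)
  choose k hk hkmin using key
  have hpos : ∀ r, (0 : ℝ) < (θ (r + 1) : ℝ) - (θ r : ℝ) := fun r => by
    have := hlt r; rw [sub_pos]; exact_mod_cast this
  -- eventually the min is small
  have hsmall : ∀ ε > (0 : ℝ), ∀ᶠ r in atTop, ‖x (k r) - L‖ < ε := by
    intro ε hε
    have h1 : ∀ᶠ r in atTop, (1 / (θ (r + 1) - θ r : ℝ)) *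
        (((Finset.Ioc (θ r) (θ (r + 1))).filter (fun j => ε ≤ ‖x j - L‖)).card : ℝ) < 1 :=
      (hL ε hε).eventually_lt_const one_pos
    filter_upwards [h1] with r hr
    have hcardlt : (((Finset.Ioc (θ r) (θ (r + 1))).filter (fun j => ε ≤ ‖x j - L‖)).card : ℝ)
        < (θ (r + 1) : ℝ) - (θ r : ℝ) := by
      have h2 := hpos r
      rw [one_div, inv_mul_lt_iff₀ h2, mul_one] at hr
      exact hr
    have hcard : ((Finset.Ioc (θ r) (θ (r + 1))).filter (fun j => ε ≤ ‖x j - L‖)).card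
        < (Finset.Ioc (θ r) (θ (r + 1))).card := by
      rw [Nat.card_Ioc]
      have hle := (hlt r).le
      have h3 : (((Finset.Ioc (θ r) (θ (r + 1))).filter (fun j => ε ≤ ‖x j - L‖)).card : ℝ)
          < ((θ (r + 1) - θ r : ℕ) : ℝ) := by push_cast [hle]; linarith
      exact_mod_cast h3
    have hss : (Finset.Ioc (θ r) (θ (r + 1))).filter (fun j => ε ≤ ‖x j - L‖)
        ⊂ Finset.Ioc (θ r) (θ (r + 1)) :=
      (Finset.filter_subset _ _).ssubset_of_ne (fun h => by rw [h] at hcard; exact lt_irrefl _ hcard)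
    obtain ⟨j, hj, hj2⟩ := Finset.exists_of_ssubset hss
    have hjlt : ‖x j - L‖ < ε := by
      by_contra hc
      exact hj2 (Finset.mem_filter.2 ⟨hj, le_of_not_gt hc⟩)
    exact lt_of_le_of_lt (hkmin r j hj) hjlt
  have hklim : Tendsto (fun r => x (k r)) atTop (nhds L) := by
    rw [tendsto_iff_norm_sub_tendsto_zero]
    rw [NormedAddCommGroup.tendsto_nhds_zero]
    intro ε hε
    filter_upwards [hsmall ε hε] with r hr
    simpa using hr
  refine ⟨k, L, hk, hklim, ?_⟩
  intro ε hε
  apply squeeze_zero' (g := fun r => (1 / (θ (r + 1) - θ r : ℝ)) *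
      (((Finset.Ioc (θ r) (θ (r + 1))).filter (fun j => ε / 2 ≤ ‖x j - L‖)).card : ℝ))
  · filter_upwards with r
    exact mul_nonneg (le_of_lt (one_div_pos.2 (hpos r))) (Nat.cast_nonneg _)
  · filter_upwards [hsmall (ε / 2) (by linarith)] with r hr
    have hsub : (Finset.Ioc (θ r) (θ (r + 1))).filter (fun j => ε ≤ ‖x j - x (k r)‖) ⊆
        (Finset.Ioc (θ r) (θ (r + 1))).filter (fun j => ε / 2 ≤ ‖x j - L‖) := by
      intro j hj
      rw [Finset.mem_filter] at hj ⊢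
      refine ⟨hj.1, ?_⟩
      by_contra hc
      push_neg at hc
      have : ‖x j - x (k r)‖ ≤ ‖x j - L‖ + ‖x (k r) - L‖ := by
        rw [← sub_sub_sub_cancel_right (x j) (x (k r)) L]
        exact norm_sub_le _ _
      linarith [hj.2]
    have h4 := Finset.card_le_card hsub
    gcongr
    exact le_of_lt (one_div_pos.2 (hpos r))
  · exact hL (ε / 2) (by linarith)
end

section
/- Let X be a real Banach space and θ = (k_r) a lacunary sequence. If a sequence (x_k) in X is lacunary statistically Cauchy, i.e. there exists a selection of indices k'(r) ∈ I_r for every r ∈ ℕ such that lim_{r→∞} x_{k'(r)} = L in norm for some L ∈ X, and for every ε > 0, lim_{r→∞} (1/h_r)|{k ∈ I_r : ‖x_k − x_{k'(r)}‖ ≥ ε}| = 0, then (x_k) is lacunary statistically convergent (S_θ-convergent) to L. -/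
open Filter Finset
open scoped Classical

/-- An `S_θ`-Cauchy sequence is `S_θ`-convergent (to the limit of the selected subsequence). -/
theorem sthetaCauchy_imp_sthetaConvergent {X : Type*} [NormedAddCommGroup X] [NormedSpace ℝ X]
    [CompleteSpace X] (θ : ℕ → ℕ) (hθ : IsLacunary θ) (x : ℕ → X) (k : ℕ → ℕ) (L : X)
    (hk : ∀ r, k r ∈ Finset.Ioc (θ r) (θ (r + 1)))
    (hlim : Tendsto (fun r => x (k r)) atTop (nhds L))
    (hcauchy : ∀ ε > (0 : ℝ),
      Tendsto (fun r => (1 / (θ (r + 1) - θ r : ℝ)) *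
        (((Finset.Ioc (θ r) (θ (r + 1))).filter (fun j => ε ≤ ‖x j - x (k r)‖)).card : ℝ))
        atTop (nhds 0)) :
    SthetaConvergent θ x L := by
  intro ε hε
  have hε2 : (0:ℝ) < ε / 2 := by linarith
  have hnear : ∀ᶠ r in atTop, ‖x (k r) - L‖ < ε / 2 := by
    have := hlim
    rw [Metric.tendsto_atTop] at this
    obtain ⟨N, hN⟩ := this (ε / 2) hε2
    filter_upwards [eventually_ge_atTop N] with r hr
    simpa [dist_eq_norm] using hN r hr
  refine squeeze_zero' ?_ ?_ (hcauchy (ε/2) hε2)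
  · filter_upwards with r
    have hlt : (θ r : ℝ) < θ (r+1) := by exact_mod_cast hθ.2.1 (Nat.lt_succ_self r)
    have h1 : (0:ℝ) ≤ 1 / ((θ (r+1) : ℝ) - θ r) := by
      rw [one_div]; exact inv_nonneg.mpr (by linarith)
    exact mul_nonneg h1 (Nat.cast_nonneg _)
  · filter_upwards [hnear] with r hr
    have hsub : (Finset.Ioc (θ r) (θ (r + 1))).filter (fun j => ε ≤ ‖x j - L‖) ⊆
        (Finset.Ioc (θ r) (θ (r + 1))).filter (fun j => ε/2 ≤ ‖x j - x (k r)‖) := by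
      intro j hj
      rw [Finset.mem_filter] at hj ⊢
      refine ⟨hj.1, ?_⟩
      have h1 : ‖x j - L‖ ≤ ‖x j - x (k r)‖ + ‖x (k r) - L‖ := by
        simpa using norm_sub_le_norm_sub_add_norm_sub (x j) (x (k r)) L
      linarith [hj.2]
    have hcard : (((Finset.Ioc (θ r) (θ (r + 1))).filter (fun j => ε ≤ ‖x j - L‖)).card : ℝ) ≤
        (((Finset.Ioc (θ r) (θ (r + 1))).filter (fun j => ε/2 ≤ ‖x j - x (k r)‖)).card : ℝ) := by
      exact_mod_cast Finset.card_le_card hsub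
    have hlt : (θ r : ℝ) < θ (r+1) := by exact_mod_cast hθ.2.1 (Nat.lt_succ_self r)
    apply mul_le_mul_of_nonneg_left hcard
    rw [one_div]; exact inv_nonneg.mpr (by linarith)
end

section
/- Let X be a real Banach space, θ = (k_r) a lacunary sequence, and ∑ x_i a series in X. The following are equivalent: (1) ∑ x_i is weakly unconditionally Cauchy; (2) the space S_{S_θ}(∑ x_i) = {(a_i) ∈ ℓ_∞ : the partial sums of ∑ a_i x_i are S_θ-summable}, endowed with the supremum norm, is complete; (3) c_0 ⊆ S_{S_θ}(∑ x_i), i.e. for every sequence (a_i) of reals converging to 0, the sequence of partial sums S_k = ∑_{i=1}^k a_i x_i is lacunary statistically convergent to some L ∈ X. -/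
open Filter Finset
open scoped Classical

/-- The series `∑ x i` is weakly unconditionally Cauchy: `∑ |f (x i)| < ∞`
for every continuous linear functional `f`. -/
def WUCSeries {X : Type*} [NormedAddCommGroup X] [NormedSpace ℝ X] (x : ℕ → X) : Prop :=
  ∀ f : X →L[ℝ] ℝ, Summable fun i => |f (x i)|

/-- The `S_θ`-summability space of the series `∑ x i`, viewed as a subset of `ℓ∞`
(with the supremum norm): bounded scalar sequences `a` for which the partial sums of
`∑ a i • x i` are `S_θ`-convergent to some element of `X`. -/
def SthetaSummabilitySpace {X : Type*} [NormedAddCommGroup X] [NormedSpace ℝ X]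
    (θ : ℕ → ℕ) (x : ℕ → X) : Set (lp (fun _ : ℕ => ℝ) ⊤) :=
  {a | ∃ L : X, SthetaConvergent θ (fun n => ∑ i ∈ Finset.range n, a i • x i) L}

set_option synthInstance.maxHeartbeats 1000000
set_option maxHeartbeats 1000000

section Aux
variable {X : Type*} [NormedAddCommGroup X] [NormedSpace ℝ X] {θ : ℕ → ℕ}

lemma hr_pos (hθ : IsLacunary θ) (r : ℕ) : (0:ℝ) < (θ (r+1) : ℝ) - (θ r : ℝ) := by
  have := hθ.2.1 (Nat.lt_succ_self r)
  have : (θ r : ℝ) < θ (r+1) := by exact_mod_cast this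
  linarith

lemma sthetaOfTendsto (hθ : IsLacunary θ) {y : ℕ → X} {L : X}
    (h : Tendsto y atTop (nhds L)) : SthetaConvergent θ y L := by
  intro ε hε
  obtain ⟨K, hK⟩ := (Metric.tendsto_atTop.1 h) ε hε
  have hev : ∀ᶠ r in atTop, (1 / (θ (r + 1) - θ r : ℝ)) *
      (((Finset.Ioc (θ r) (θ (r + 1))).filter (fun k => ε ≤ ‖y k - L‖)).card : ℝ) = 0 := by
    filter_upwards [eventually_ge_atTop K] with r hr
    have hfil : ((Finset.Ioc (θ r) (θ (r + 1))).filter (fun k => ε ≤ ‖y k - L‖)) = ∅ := by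
      apply Finset.filter_false_of_mem
      intro k hk
      have hk' : K ≤ k := le_trans (le_trans hr (hθ.2.1.le_apply)) (Finset.mem_Ioc.1 hk).1.le
      have := hK k hk'
      rw [dist_eq_norm] at this
      push_neg
      linarith
    rw [hfil]; simp
  exact Tendsto.congr' (by filter_upwards [hev] with r h using h.symm) tendsto_const_nhds

lemma not_stheta_of_f (hθ : IsLacunary θ) {y : ℕ → X} (f : X →L[ℝ] ℝ)
    (hf : Tendsto (fun k => f (y k)) atTop atTop) (L : X) :
    ¬ SthetaConvergent θ y L := by
  intro hs
  have hf0 : f ≠ 0 := by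
    rintro rfl
    have := (hf.eventually_ge_atTop 1).exists
    obtain ⟨k, hk⟩ := this
    simp at hk
    linarith
  have hfpos : (0:ℝ) < ‖f‖ := norm_pos_iff.2 hf0
  obtain ⟨K, hK⟩ := (hf.eventually_ge_atTop (f L + ‖f‖)).exists_forall_of_atTop
  have hbig : ∀ k ≥ K, (1:ℝ) ≤ ‖y k - L‖ := by
    intro k hk
    have h1 : ‖f‖ ≤ f (y k) - f L := by have := hK k hk; linarith
    have h2 : f (y k) - f L = f (y k - L) := by rw [map_sub]
    have h3 : f (y k - L) ≤ ‖f‖ * ‖y k - L‖ := le_trans (le_abs_self _) (f.le_opNorm _)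
    rw [h2] at h1
    have := le_trans h1 h3
    nlinarith
  have hone := hs 1 one_pos
  have hev : ∀ᶠ r in atTop, (1 / (θ (r + 1) - θ r : ℝ)) *
      (((Finset.Ioc (θ r) (θ (r + 1))).filter (fun k => (1:ℝ) ≤ ‖y k - L‖)).card : ℝ) = 1 := by
    filter_upwards [eventually_ge_atTop K] with r hr
    have hfil : ((Finset.Ioc (θ r) (θ (r + 1))).filter (fun k => (1:ℝ) ≤ ‖y k - L‖)) =
        Finset.Ioc (θ r) (θ (r + 1)) := by
      apply Finset.filter_true_of_mem
      intro k hk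
      exact hbig k (le_trans (le_trans hr hθ.2.1.le_apply) (Finset.mem_Ioc.1 hk).1.le)
    rw [hfil, Nat.card_Ioc, Nat.cast_sub (hθ.2.1 (Nat.lt_succ_self r)).le]
    rw [one_div, inv_mul_eq_div, div_eq_one_iff_eq (ne_of_gt (hr_pos hθ r))]
  have : Tendsto (fun _ : ℕ => (1:ℝ)) atTop (nhds 0) :=
    Tendsto.congr' (by filter_upwards [hev] with r h using h) hone
  have h0 : (1:ℝ) = 0 := tendsto_nhds_unique (tendsto_const_nhds : Tendsto (fun _ : ℕ => (1:ℝ)) atTop (nhds 1)) this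
  exact one_ne_zero h0

lemma exists_good (hθ : IsLacunary θ) {y z : ℕ → X} {L M : X}
    (hy : SthetaConvergent θ y L) (hz : SthetaConvergent θ z M) {ε : ℝ} (hε : 0 < ε) :
    ∃ k, ‖y k - L‖ < ε ∧ ‖z k - M‖ < ε := by
  have h1 := (hy ε hε).eventually (gt_mem_nhds (by norm_num : (0:ℝ) < 1/2))
  have h2 := (hz ε hε).eventually (gt_mem_nhds (by norm_num : (0:ℝ) < 1/2))
  obtain ⟨r, hr1, hr2⟩ := (h1.and h2).exists
  set I := Finset.Ioc (θ r) (θ (r + 1))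
  set Fy := I.filter (fun k => ε ≤ ‖y k - L‖)
  set Fz := I.filter (fun k => ε ≤ ‖z k - M‖)
  have hpos := hr_pos hθ r
  have hcard : (Fy.card : ℝ) + (Fz.card : ℝ) < ((θ (r+1) : ℝ) - θ r) := by
    have e1 : (Fy.card : ℝ) < ((θ (r+1) : ℝ) - θ r) / 2 := by
      rw [lt_div_iff₀ (by norm_num : (0:ℝ) < 2)]
      have := hr1
      rw [one_div, inv_mul_eq_div, div_lt_iff₀ hpos] at this
      linarith
    have e2 : (Fz.card : ℝ) < ((θ (r+1) : ℝ) - θ r) / 2 := by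
      rw [lt_div_iff₀ (by norm_num : (0:ℝ) < 2)]
      have := hr2
      rw [one_div, inv_mul_eq_div, div_lt_iff₀ hpos] at this
      linarith
    linarith
  have hIcard : (I.card : ℝ) = (θ (r+1) : ℝ) - θ r := by
    rw [Nat.card_Ioc, Nat.cast_sub (hθ.2.1 (Nat.lt_succ_self r)).le]
  have hlt : (Fy ∪ Fz).card < I.card := by
    have : ((Fy ∪ Fz).card : ℝ) < (I.card : ℝ) := by
      calc ((Fy ∪ Fz).card : ℝ) ≤ (Fy.card : ℝ) + Fz.card := by
            exact_mod_cast Finset.card_union_le Fy Fz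
        _ < _ := by rw [hIcard]; exact hcard
    exact_mod_cast this
  have : ¬ I ⊆ Fy ∪ Fz := fun hsub => absurd (Finset.card_le_card hsub) (not_le.2 hlt)
  obtain ⟨k, hkI, hk⟩ := Finset.not_subset.1 this
  simp only [Finset.mem_union, not_or, Fy, Fz, Finset.mem_filter, not_and, not_le] at hk
  exact ⟨k, hk.1 hkI, hk.2 hkI⟩

lemma dist_limits_le (hθ : IsLacunary θ) {y z : ℕ → X} {L M : X}
    (hy : SthetaConvergent θ y L) (hz : SthetaConvergent θ z M) {d : ℝ}
    (hd : ∀ k, ‖y k - z k‖ ≤ d) : ‖L - M‖ ≤ d := by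
  refine le_of_forall_pos_le_add fun ε hε => ?_
  obtain ⟨k, h1, h2⟩ := exists_good hθ hy hz (half_pos hε)
  calc ‖L - M‖ ≤ ‖L - y k‖ + ‖y k - z k‖ + ‖z k - M‖ := by
        have := norm_add₃_le (a := L - y k) (b := y k - z k) (c := z k - M)
        simpa using this
    _ ≤ ε/2 + d + ε/2 := by
        rw [norm_sub_rev] at h1
        exact add_le_add (add_le_add h1.le (hd k)) h2.le
    _ = d + ε := by ring

lemma wuc_bound [CompleteSpace X] {x : ℕ → X} (hx : WUCSeries x) :
    ∃ C : ℝ, 0 ≤ C ∧ ∀ (a : ℕ → ℝ) (δ : ℝ) (n : ℕ),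
      (∀ i, |a i| ≤ δ) → ‖∑ i ∈ Finset.range n, a i • x i‖ ≤ C * δ := by
  set ι := {p : (ℕ → ℝ) × ℕ // ∀ i, |p.1 i| ≤ 1}
  set g : ι → StrongDual ℝ X →L[ℝ] ℝ := fun p =>
    NormedSpace.inclusionInDoubleDualLi ℝ (∑ i ∈ Finset.range p.1.2, p.1.1 i • x i)
  have hpt : ∀ f : StrongDual ℝ X, ∃ C, ∀ p : ι, ‖g p f‖ ≤ C := by
    intro f
    refine ⟨∑' i, |f (x i)|, fun p => ?_⟩
    have : g p f = f (∑ i ∈ Finset.range p.1.2, p.1.1 i • x i) := rfl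
    rw [this, map_sum]
    calc ‖∑ i ∈ Finset.range p.1.2, f (p.1.1 i • x i)‖
        ≤ ∑ i ∈ Finset.range p.1.2, ‖f (p.1.1 i • x i)‖ := norm_sum_le _ _
      _ ≤ ∑ i ∈ Finset.range p.1.2, |f (x i)| := by
          apply Finset.sum_le_sum
          intro i _
          rw [map_smul]
          simp only [smul_eq_mul, Real.norm_eq_abs, abs_mul]
          calc |p.1.1 i| * |f (x i)| ≤ 1 * |f (x i)| :=
                mul_le_mul_of_nonneg_right (p.2 i) (abs_nonneg _)
            _ = |f (x i)| := one_mul _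
      _ ≤ ∑' i, |f (x i)| := Summable.sum_le_tsum _ (fun i _ => abs_nonneg _) (hx f)
  obtain ⟨C', hC'⟩ := banach_steinhaus hpt
  refine ⟨max C' 0, le_max_right _ _, fun a δ n ha => ?_⟩
  have hδ : 0 ≤ δ := le_trans (abs_nonneg (a 0)) (ha 0)
  rcases eq_or_lt_of_le hδ with h0 | h0
  · have : ∀ i, a i = 0 := fun i => abs_eq_zero.1 (le_antisymm (h0 ▸ ha i) (abs_nonneg _))
    simp only [this, zero_smul, Finset.sum_const_zero, norm_zero, ← h0, mul_zero, le_refl]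
  · set a' : ℕ → ℝ := fun i => a i / δ
    have ha' : ∀ i, |a' i| ≤ 1 := by
      intro i
      rw [abs_div, abs_of_pos h0, div_le_one h0]
      exact ha i
    have key : ‖∑ i ∈ Finset.range n, a' i • x i‖ ≤ C' := by
      have := hC' ⟨(a', n), ha'⟩
      rwa [LinearIsometry.norm_map] at this
    have heq : ∑ i ∈ Finset.range n, a i • x i = δ • ∑ i ∈ Finset.range n, a' i • x i := by
      rw [Finset.smul_sum]
      apply Finset.sum_congr rfl
      intro i _
      rw [smul_smul]
      congr 1
      simp only [a']; field_simp [h0.ne']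
    rw [heq, norm_smul, Real.norm_eq_abs, abs_of_pos h0, mul_comm]
    exact mul_le_mul_of_nonneg_right (le_trans key (le_max_left _ _)) hδ

lemma wuc_c0_conv [CompleteSpace X] {x : ℕ → X} (hx : WUCSeries x) {a : ℕ → ℝ}
    (ha : Tendsto a atTop (nhds 0)) :
    ∃ L, Tendsto (fun n => ∑ i ∈ Finset.range n, a i • x i) atTop (nhds L) := by
  obtain ⟨C, hC0, hC⟩ := wuc_bound hx
  apply cauchySeq_tendsto_of_complete
  rw [Metric.cauchySeq_iff']
  intro ε hε
  have hδ : (0:ℝ) < ε / (2 * (C + 1)) := by positivity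
  obtain ⟨N, hN⟩ := (Metric.tendsto_atTop.1 ha) _ hδ
  refine ⟨N, fun n hn => ?_⟩
  set c : ℕ → ℝ := fun i => if N ≤ i then a i else 0 with hcdef
  have hc : ∀ i, |c i| ≤ ε / (2 * (C + 1)) := by
    intro i
    by_cases h : N ≤ i
    · simp only [hcdef, if_pos h]
      have := hN i h
      rw [Real.dist_eq, sub_zero] at this
      exact this.le
    · simp only [hcdef, if_neg h, abs_zero]
      exact hδ.le
  have h1 : ∑ i ∈ Finset.range n, c i • x i = ∑ i ∈ Finset.Ico N n, a i • x i := by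
    rw [Finset.range_eq_Ico, ← Finset.sum_Ico_consecutive _ (Nat.zero_le N) hn]
    have hz : ∑ i ∈ Finset.Ico 0 N, c i • x i = 0 :=
      Finset.sum_eq_zero fun i hi => by
        simp only [Finset.mem_Ico] at hi
        simp [hcdef, not_le.2 hi.2]
    rw [hz, zero_add]
    exact Finset.sum_congr rfl fun i hi => by
      simp only [Finset.mem_Ico] at hi
      simp [hcdef, hi.1]
  have h2 : ∑ i ∈ Finset.Ico N n, a i • x i
      = (∑ i ∈ Finset.range n, a i • x i) - ∑ i ∈ Finset.range N, a i • x i :=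
    Finset.sum_Ico_eq_sub _ hn
  rw [dist_eq_norm, ← h2, ← h1]
  calc ‖∑ i ∈ Finset.range n, c i • x i‖ ≤ C * (ε / (2 * (C + 1))) := hC c _ n hc
    _ < ε := by
        rw [mul_div_assoc']
        rw [div_lt_iff₀ (by positivity)]
        nlinarith

lemma mySign_mul_self (t : ℝ) : Real.sign t * t = |t| := by
  rcases lt_trichotomy t 0 with h | h | h
  · rw [Real.sign_of_neg h, abs_of_neg h]; ring
  · simp [h]
  · rw [Real.sign_of_pos h, abs_of_pos h]; ring

lemma myAbs_sign_le (t : ℝ) : |Real.sign t| ≤ 1 := by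
  rcases lt_trichotomy t 0 with h | h | h
  · rw [Real.sign_of_neg h]; norm_num
  · simp [h]
  · rw [Real.sign_of_pos h]; norm_num

lemma mySqrt_atTop {u : ℕ → ℝ} (hu : Tendsto u atTop atTop) :
    Tendsto (fun i => Real.sqrt (u i)) atTop atTop := by
  rw [tendsto_atTop] at *
  intro M
  filter_upwards [hu (M^2)] with i h1
  calc M ≤ |M| := le_abs_self M
    _ = Real.sqrt (M^2) := (Real.sqrt_sq_eq_abs M).symm
    _ ≤ Real.sqrt (u i) := Real.sqrt_le_sqrt h1

lemma not_wuc_bad (hθ : IsLacunary θ) {x : ℕ → X} (hx : ¬ WUCSeries x) :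
    ∃ a : ℕ → ℝ, Tendsto a atTop (nhds 0) ∧ (∀ i, |a i| ≤ 1) ∧
      ∀ L : X, ¬ SthetaConvergent θ (fun n => ∑ i ∈ Finset.range n, a i • x i) L := by
  rw [WUCSeries] at hx
  push_neg at hx
  obtain ⟨f, hf⟩ := hx
  set s : ℕ → ℝ := fun n => ∑ i ∈ Finset.range (n+1), |f (x i)| with hs
  have hs_tend : Tendsto s atTop atTop := by
    have h0 := (not_summable_iff_tendsto_nat_atTop_of_nonneg (fun n => abs_nonneg (f (x n)))).1 hf
    exact (tendsto_add_atTop_iff_nat 1).2 h0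
  set b : ℕ → ℝ := fun i => 1 / Real.sqrt (1 + s i) with hb
  have hs_nonneg : ∀ i, 0 ≤ s i := fun i => Finset.sum_nonneg fun j _ => abs_nonneg _
  have hsq_pos : ∀ i, (0:ℝ) < Real.sqrt (1 + s i) := fun i =>
    Real.sqrt_pos.2 (by linarith [hs_nonneg i])
  have hsq_ge1 : ∀ i, (1:ℝ) ≤ Real.sqrt (1 + s i) := by
    intro i
    have := Real.sqrt_le_sqrt (show (1:ℝ) ≤ 1 + s i by linarith [hs_nonneg i])
    rwa [Real.sqrt_one] at this
  have hb_pos : ∀ i, 0 < b i := fun i => by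
    simp only [hb]
    positivity
  have hb_le1 : ∀ i, b i ≤ 1 := fun i => by
    simp only [hb, one_div]
    rw [inv_le_one_iff₀]
    right; exact hsq_ge1 i
  have hsqrt_tend : Tendsto (fun i => Real.sqrt (1 + s i)) atTop atTop :=
    mySqrt_atTop (tendsto_atTop_add_const_left atTop 1 hs_tend)
  have hb_tend : Tendsto b atTop (nhds 0) := by
    have := tendsto_inv_atTop_zero.comp hsqrt_tend
    simpa [hb, one_div, Function.comp_def] using this
  set a : ℕ → ℝ := fun i => Real.sign (f (x i)) * b i with hadef
  have ha_tend : Tendsto a atTop (nhds 0) := by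
    apply squeeze_zero_norm (fun i => ?_) hb_tend
    simp only [hadef, Real.norm_eq_abs, abs_mul]
    calc |Real.sign (f (x i))| * |b i| ≤ 1 * |b i| :=
          mul_le_mul_of_nonneg_right (myAbs_sign_le _) (abs_nonneg _)
      _ = b i := by rw [one_mul, abs_of_pos (hb_pos i)]
  have ha_le1 : ∀ i, |a i| ≤ 1 := by
    intro i
    simp only [hadef, abs_mul]
    calc |Real.sign (f (x i))| * |b i| ≤ 1 * 1 := by
          apply mul_le_mul (myAbs_sign_le _) _ (abs_nonneg _) zero_le_one
          rw [abs_of_pos (hb_pos i)]; exact hb_le1 i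
      _ = 1 := one_mul 1
  refine ⟨a, ha_tend, ha_le1, fun L => not_stheta_of_f hθ f ?_ L⟩
  have hterm : ∀ i, a i * f (x i) = b i * |f (x i)| := by
    intro i
    simp only [hadef]
    rw [mul_comm (Real.sign (f (x i))) (b i), mul_assoc, mySign_mul_self, mul_comm]
  have hfsum : ∀ n, f (∑ i ∈ Finset.range n, a i • x i)
      = ∑ i ∈ Finset.range n, b i * |f (x i)| := by
    intro n
    rw [map_sum]
    exact Finset.sum_congr rfl fun i _ => by rw [map_smul, smul_eq_mul, hterm i]
  have hstep : ∀ i, s (i+1) - s i = |f (x (i+1))| := by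
    intro i
    simp only [hs]
    rw [Finset.sum_range_succ (n := i+1)]
    ring
  have hlow : ∀ i, Real.sqrt (1 + s (i+1)) - Real.sqrt (1 + s i) ≤ b (i+1) * |f (x (i+1))| := by
    intro i
    set A := Real.sqrt (1 + s (i+1)) with hA'
    set B := Real.sqrt (1 + s i) with hB'
    have hA : 0 < A := hsq_pos _
    have hB : 0 < B := hsq_pos _
    have hBA : B ≤ A := by
      rw [hA', hB']
      exact Real.sqrt_le_sqrt (by linarith [abs_nonneg (f (x (i+1))), hstep i])
    have hAB : A * A - B * B = |f (x (i+1))| := by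
      rw [hA', hB', Real.mul_self_sqrt (by linarith [hs_nonneg (i+1)]),
        Real.mul_self_sqrt (by linarith [hs_nonneg i])]
      linarith [hstep i]
    have hb1 : b (i+1) * |f (x (i+1))| = |f (x (i+1))| / A := by
      simp only [hb, one_div]
      rw [mul_comm, ← div_eq_mul_inv]
    rw [hb1, ← hAB, le_div_iff₀ hA]
    nlinarith
  have hlow2 : ∀ n, Real.sqrt (1 + s n) - Real.sqrt (1 + s 0)
      ≤ f (∑ i ∈ Finset.range (n+1), a i • x i) := by
    intro n
    rw [hfsum]
    calc Real.sqrt (1 + s n) - Real.sqrt (1 + s 0)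
        = ∑ i ∈ Finset.range n, (Real.sqrt (1 + s (i+1)) - Real.sqrt (1 + s i)) := by
          rw [Finset.sum_range_sub (fun i => Real.sqrt (1 + s i))]
      _ ≤ ∑ i ∈ Finset.range n, b (i+1) * |f (x (i+1))| :=
          Finset.sum_le_sum fun i _ => hlow i
      _ ≤ ∑ i ∈ Finset.range (n+1), b i * |f (x i)| := by
          rw [Finset.sum_range_succ' (fun i => b i * |f (x i)|) n]
          have : 0 ≤ b 0 * |f (x 0)| := mul_nonneg (hb_pos 0).le (abs_nonneg _)
          linarith
  have hmain : Tendsto (fun n => f (∑ i ∈ Finset.range (n+1), a i • x i)) atTop atTop := by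
    apply tendsto_atTop_mono hlow2
    apply tendsto_atTop_add_const_right
    exact mySqrt_atTop (tendsto_atTop_add_const_left atTop 1 hs_tend)
  exact (tendsto_add_atTop_iff_nat 1).1 hmain

lemma wuc_isComplete [CompleteSpace X] (hθ : IsLacunary θ) {x : ℕ → X} (hx : WUCSeries x) :
    IsComplete (SthetaSummabilitySpace θ x) := by
  haveI : Fact ((1:ENNReal) ≤ ⊤) := ⟨le_top⟩
  obtain ⟨C, hC0, hC⟩ := wuc_bound hx
  have key : ∀ (v w : lp (fun _ : ℕ => ℝ) ⊤) (k : ℕ),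
      ‖(∑ i ∈ Finset.range k, v i • x i) - ∑ i ∈ Finset.range k, w i • x i‖ ≤ C * ‖v - w‖ := by
    intro v w k
    have hdiff : (∑ i ∈ Finset.range k, v i • x i) - ∑ i ∈ Finset.range k, w i • x i
        = ∑ i ∈ Finset.range k, (v i - w i) • x i := by
      rw [← Finset.sum_sub_distrib]
      exact Finset.sum_congr rfl fun i _ => (sub_smul _ _ _).symm
    rw [hdiff]
    apply hC (fun i => v i - w i) (‖v - w‖) k
    intro i
    have h := lp.norm_apply_le_norm ENNReal.top_ne_zero (v - w) i
    simpa [lp.coeFn_sub] using h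
  apply IsClosed.isComplete
  apply IsSeqClosed.isClosed
  intro u a hu hua
  simp only [SthetaSummabilitySpace, Set.mem_setOf_eq] at hu ⊢
  choose L hL using hu
  have hLdist : ∀ n m, ‖L n - L m‖ ≤ C * ‖u n - u m‖ := fun n m =>
    dist_limits_le hθ (hL n) (hL m) (fun k => key (u n) (u m) k)
  have hLcauchy : CauchySeq L := by
    rw [Metric.cauchySeq_iff']
    intro ε hε
    have hucs : CauchySeq u := hua.cauchySeq
    rw [Metric.cauchySeq_iff'] at hucs
    obtain ⟨N, hN⟩ := hucs (ε / (C + 1)) (by positivity)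
    refine ⟨N, fun n hn => ?_⟩
    have h1 := hLdist n N
    have h2 := hN n hn
    rw [dist_eq_norm] at h2 ⊢
    have h3 : C * ‖u n - u N‖ ≤ C * (ε/(C+1)) := mul_le_mul_of_nonneg_left h2.le hC0
    have h4 : C * (ε/(C+1)) < ε := by
      rw [mul_div_assoc', div_lt_iff₀ (by positivity)]
      nlinarith
    linarith
  obtain ⟨Lim, hLim⟩ := cauchySeq_tendsto_of_complete hLcauchy
  refine ⟨Lim, ?_⟩
  intro ε hε
  obtain ⟨n0, hn1, hn2⟩ : ∃ n0, C * ‖u n0 - a‖ < ε/3 ∧ ‖L n0 - Lim‖ < ε/3 := by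
    have e1 : Tendsto (fun n => C * ‖u n - a‖) atTop (nhds 0) := by
      have h' : Tendsto (fun n => ‖u n - a‖) atTop (nhds 0) :=
        tendsto_iff_norm_sub_tendsto_zero.1 hua
      simpa using h'.const_mul C
    have e2 : Tendsto (fun n => ‖L n - Lim‖) atTop (nhds 0) :=
      tendsto_iff_norm_sub_tendsto_zero.1 hLim
    exact ((e1.eventually (gt_mem_nhds (by positivity : (0:ℝ) < ε/3))).and
      (e2.eventually (gt_mem_nhds (by positivity : (0:ℝ) < ε/3)))).exists
  have hsub : ∀ r, ((Finset.Ioc (θ r) (θ (r+1))).filter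
      (fun k => ε ≤ ‖(∑ i ∈ Finset.range k, a i • x i) - Lim‖)) ⊆
      ((Finset.Ioc (θ r) (θ (r+1))).filter
      (fun k => ε/3 ≤ ‖(∑ i ∈ Finset.range k, (u n0) i • x i) - L n0‖)) := by
    intro r k hk
    rw [Finset.mem_filter] at hk ⊢
    refine ⟨hk.1, ?_⟩
    by_contra hlt
    push_neg at hlt
    have t1 : ‖(∑ i ∈ Finset.range k, a i • x i) - ∑ i ∈ Finset.range k, (u n0) i • x i‖
        ≤ C * ‖u n0 - a‖ := by
      have := key a (u n0) k
      rwa [norm_sub_rev (a := a)] at this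
    have t2 : ‖(∑ i ∈ Finset.range k, a i • x i) - Lim‖ < ε := by
      calc ‖(∑ i ∈ Finset.range k, a i • x i) - Lim‖
          ≤ ‖(∑ i ∈ Finset.range k, a i • x i) - ∑ i ∈ Finset.range k, (u n0) i • x i‖
            + ‖(∑ i ∈ Finset.range k, (u n0) i • x i) - L n0‖ + ‖L n0 - Lim‖ := by
            have := norm_add₃_le (a := (∑ i ∈ Finset.range k, a i • x i)
              - ∑ i ∈ Finset.range k, (u n0) i • x i)
              (b := (∑ i ∈ Finset.range k, (u n0) i • x i) - L n0) (c := L n0 - Lim)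
            simpa using this
        _ < ε/3 + ε/3 + ε/3 := by
            apply add_lt_add (add_lt_add_of_le_of_lt (le_trans t1 hn1.le) hlt) hn2
        _ = ε := by ring
    linarith [hk.2]
  apply squeeze_zero (fun r => ?_) (fun r => ?_) (hL n0 (ε/3) (by positivity))
  · apply mul_nonneg
    · exact le_of_lt (by rw [one_div]; exact inv_pos.2 (hr_pos hθ r))
    · positivity
  · apply mul_le_mul_of_nonneg_left
    · exact_mod_cast Finset.card_le_card (hsub r)
    · exact le_of_lt (by rw [one_div]; exact inv_pos.2 (hr_pos hθ r))

lemma isComplete_wuc [CompleteSpace X] (hθ : IsLacunary θ) {x : ℕ → X}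
    (hc : IsComplete (SthetaSummabilitySpace θ x)) : WUCSeries x := by
  by_contra hx
  obtain ⟨a, ha0, ha1, hbad⟩ := not_wuc_bad hθ hx
  have hmem : Memℓp a ⊤ := memℓp_infty ⟨1, by
    rintro - ⟨i, rfl⟩
    simpa [Real.norm_eq_abs] using ha1 i⟩
  set A : lp (fun _ : ℕ => ℝ) ⊤ := ⟨a, hmem⟩ with hA
  have hUmemlp : ∀ n : ℕ, Memℓp (fun i => if i < n then a i else 0) (⊤ : ENNReal) := by
    intro n
    apply memℓp_infty
    refine ⟨1, ?_⟩
    rintro - ⟨i, rfl⟩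
    by_cases h : i < n
    · simpa [h, Real.norm_eq_abs] using ha1 i
    · simp [h]
  set U : ℕ → lp (fun _ : ℕ => ℝ) ⊤ := fun n => ⟨fun i => if i < n then a i else 0, hUmemlp n⟩
    with hU
  have hUcoe : ∀ n i, (U n : ∀ _ : ℕ, ℝ) i = if i < n then a i else 0 := fun n i => rfl
  have hAcoe : ∀ i, (A : ∀ _ : ℕ, ℝ) i = a i := fun i => rfl
  have hUS : ∀ n, U n ∈ SthetaSummabilitySpace θ x := by
    intro n
    refine ⟨∑ i ∈ Finset.range n, a i • x i, sthetaOfTendsto hθ ?_⟩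
    have hconst : ∀ k ≥ n, ∑ i ∈ Finset.range k, (U n : ∀ _ : ℕ, ℝ) i • x i
        = ∑ i ∈ Finset.range n, a i • x i := by
      intro k hk
      rw [← Finset.sum_subset (Finset.range_subset_range.2 hk)]
      · apply Finset.sum_congr rfl
        intro i hi
        rw [Finset.mem_range] at hi
        rw [hUcoe, if_pos hi]
      · intro i _ hi
        rw [Finset.mem_range] at hi
        rw [hUcoe, if_neg hi, zero_smul]
    apply Tendsto.congr' _ tendsto_const_nhds
    filter_upwards [eventually_ge_atTop n] with k hk
    exact (hconst k hk).symm
  have hUA : Tendsto U atTop (nhds A) := by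
    rw [Metric.tendsto_atTop]
    intro ε hε
    obtain ⟨N, hN⟩ := (Metric.tendsto_atTop.1 ha0) (ε/2) (by positivity)
    refine ⟨N, fun n hn => ?_⟩
    rw [dist_eq_norm]
    have hle : ‖U n - A‖ ≤ ε/2 := by
      apply lp.norm_le_of_forall_le (by positivity)
      intro i
      have : (↑(U n - A) : ∀ _ : ℕ, ℝ) i = (if i < n then a i else 0) - a i := by
        rw [lp.coeFn_sub]
        simp [hUcoe, hAcoe]
      rw [this]
      by_cases h : i < n
      · simp [h]
        positivity
      · rw [if_neg h, zero_sub, norm_neg]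
        have hiN : N ≤ i := le_trans hn (not_lt.1 h)
        have := hN i hiN
        rw [Real.dist_eq, sub_zero] at this
        simpa [Real.norm_eq_abs] using this.le
    linarith
  obtain ⟨v, hvS, hv⟩ := cauchySeq_tendsto_of_isComplete hc hUS hUA.cauchySeq
  have hvA : v = A := tendsto_nhds_unique hv hUA
  rw [hvA] at hvS
  obtain ⟨L, hL⟩ := hvS
  exact hbad L (by simpa [hAcoe] using hL)

end Aux

/-- Characterization of wuC series via the `S_θ`-summability space. -/
theorem wuc_iff_sthetaSummabilitySpace_complete {X : Type*} [NormedAddCommGroup X]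
    [NormedSpace ℝ X] [CompleteSpace X] (θ : ℕ → ℕ) (hθ : IsLacunary θ) (x : ℕ → X) :
    (WUCSeries x ↔ IsComplete (SthetaSummabilitySpace θ x)) ∧
    (WUCSeries x ↔ ∀ a : ℕ → ℝ, Tendsto a atTop (nhds 0) →
      ∃ L : X, SthetaConvergent θ (fun n => ∑ i ∈ Finset.range n, a i • x i) L) := by
  refine ⟨⟨fun hx => wuc_isComplete hθ hx, fun hc => isComplete_wuc hθ hc⟩,
    ⟨fun hx a ha => ?_, fun h => ?_⟩⟩
  · obtain ⟨L, hL⟩ := wuc_c0_conv hx ha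
    exact ⟨L, sthetaOfTendsto hθ hL⟩
  · by_contra hx
    obtain ⟨a, ha0, _, hbad⟩ := not_wuc_bad hθ hx
    obtain ⟨L, hL⟩ := h a ha0
    exact hbad L hL
end

section
/- Let X be a real normed vector space and θ = (k_r) a lacunary sequence. Then X is complete (i.e. a Banach space) if and only if for every weakly unconditionally Cauchy series ∑ x_i in X, the space S_{N_θ}(∑ x_i) = {(a_i) ∈ ℓ_∞ : the partial sums of ∑ a_i x_i are N_θ-summable}, endowed with the supremum norm, is complete. -/
open Filter Finset
open scoped Classical

/-- The `N_θ`-summability space of the series `∑ x i`, viewed as a subset of `ℓ∞`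
(with the supremum norm): bounded scalar sequences `a` for which the partial sums of
`∑ a i • x i` are `N_θ`-summable to some element of `X`. -/
def NthetaSummabilitySpace {X : Type*} [NormedAddCommGroup X] [NormedSpace ℝ X]
    (θ : ℕ → ℕ) (x : ℕ → X) : Set (lp (fun _ : ℕ => ℝ) ⊤) :=
  {a | ∃ L : X, NthetaSummable θ (fun n => ∑ i ∈ Finset.range n, a i • x i) L}

set_option synthInstance.maxHeartbeats 1000000
set_option maxHeartbeats 2000000
open UniformSpace

lemma wuc_unit_bound {X : Type*} [NormedAddCommGroup X] [NormedSpace ℝ X]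
    {x : ℕ → X} (hx : WUCSeries x) :
    ∃ H : ℝ, 0 ≤ H ∧ ∀ (b : ℕ → ℝ), (∀ i, |b i| ≤ 1) →
      ∀ n, ‖∑ i ∈ Finset.range n, b i • x i‖ ≤ H := by
  set ι := ℕ × {b : ℕ → ℝ // ∀ i, |b i| ≤ 1} with hι
  set g : ι → StrongDual ℝ (StrongDual ℝ X) :=
    fun q => NormedSpace.inclusionInDoubleDualLi ℝ (∑ i ∈ Finset.range q.1, (q.2 : ℕ → ℝ) i • x i)
    with hg
  have hpt : ∀ f : StrongDual ℝ X, ∃ C, ∀ q : ι, ‖g q f‖ ≤ C := by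
    intro f
    refine ⟨∑' i, |f (x i)|, fun q => ?_⟩
    have : g q f = f (∑ i ∈ Finset.range q.1, (q.2 : ℕ → ℝ) i • x i) := rfl
    rw [this]
    have h1 : f (∑ i ∈ Finset.range q.1, (q.2 : ℕ → ℝ) i • x i)
        = ∑ i ∈ Finset.range q.1, (q.2 : ℕ → ℝ) i * f (x i) := by
      rw [map_sum]; simp
    rw [Real.norm_eq_abs, h1]
    calc |∑ i ∈ Finset.range q.1, (q.2 : ℕ → ℝ) i * f (x i)|
        ≤ ∑ i ∈ Finset.range q.1, |(q.2 : ℕ → ℝ) i * f (x i)| := Finset.abs_sum_le_sum_abs _ _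
      _ ≤ ∑ i ∈ Finset.range q.1, |f (x i)| := by
          apply Finset.sum_le_sum
          intro i _
          rw [abs_mul]
          exact mul_le_of_le_one_left (abs_nonneg _) (q.2.2 i)
      _ ≤ ∑' i, |f (x i)| := (hx f).sum_le_tsum _ (fun i _ => abs_nonneg _)
  obtain ⟨C', hC'⟩ := banach_steinhaus hpt
  refine ⟨max C' 0, le_max_right _ _, fun b hb n => ?_⟩
  have := hC' (n, ⟨b, hb⟩)
  have hnorm : ‖g (n, ⟨b, hb⟩)‖ = ‖∑ i ∈ Finset.range n, b i • x i‖ :=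
    (NormedSpace.inclusionInDoubleDualLi ℝ).norm_map _
  rw [hnorm] at this
  exact this.trans (le_max_left _ _)
lemma wuc_scaled {X : Type*} [NormedAddCommGroup X] [NormedSpace ℝ X]
    {x : ℕ → X} {H : ℝ} (hH : 0 ≤ H)
    (hb : ∀ (b : ℕ → ℝ), (∀ i, |b i| ≤ 1) → ∀ n, ‖∑ i ∈ Finset.range n, b i • x i‖ ≤ H)
    (a : ℕ → ℝ) (C : ℝ) (hC : ∀ i, |a i| ≤ C) (n : ℕ) :
    ‖∑ i ∈ Finset.range n, a i • x i‖ ≤ H * C := by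
  rcases le_or_gt C 0 with h0 | h0
  · have hC0 : C = 0 := le_antisymm h0 ((abs_nonneg (a 0)).trans (hC 0))
    have : ∀ i, a i = 0 := fun i => abs_eq_zero.mp (le_antisymm (hC0 ▸ hC i) (abs_nonneg _))
    simp [this, hC0]
  · have := hb (fun i => a i / C) (fun i => by
      rw [abs_div, abs_of_pos h0, div_le_one h0]; exact hC i) n
    have heq : ∑ i ∈ Finset.range n, a i • x i
        = C • ∑ i ∈ Finset.range n, (a i / C) • x i := by
      rw [Finset.smul_sum]
      refine Finset.sum_congr rfl fun i _ => ?_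
      rw [smul_smul, mul_div_cancel₀]
      exact ne_of_gt h0
    rw [heq, norm_smul, Real.norm_eq_abs, abs_of_pos h0, mul_comm C]
    exact mul_le_mul_of_nonneg_right this h0.le

lemma partial_diff {X : Type*} [NormedAddCommGroup X] [NormedSpace ℝ X]
    (x : ℕ → X) (a b : ℕ → ℝ) (n : ℕ) :
    ∑ i ∈ Finset.range n, a i • x i - ∑ i ∈ Finset.range n, b i • x i
      = ∑ i ∈ Finset.range n, (a i - b i) • x i := by
  rw [← Finset.sum_sub_distrib]
  exact Finset.sum_congr rfl fun i _ => (sub_smul _ _ _).symm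
section Avg
variable {θ : ℕ → ℕ}

lemma hr_one_le (hmono : StrictMono θ) (r : ℕ) : (1:ℝ) ≤ (θ (r+1) : ℝ) - θ r := by
  have : θ r + 1 ≤ θ (r+1) := hmono (Nat.lt_succ_self r)
  have := (Nat.cast_le (α := ℝ)).mpr this
  push_cast at this
  linarith

lemma hr_card (hmono : StrictMono θ) (r : ℕ) :
    ((Finset.Ioc (θ r) (θ (r+1))).card : ℝ) = (θ (r+1) : ℝ) - θ r := by
  rw [Nat.card_Ioc]
  rw [Nat.cast_sub (hmono (Nat.lt_succ_self r)).le]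

lemma avg_le_avg_add (hmono : StrictMono θ) {u v : ℕ → ℝ} {c : ℝ} {r : ℕ}
    (h : ∀ k ∈ Finset.Ioc (θ r) (θ (r+1)), u k ≤ v k + c) :
    (1 / ((θ (r+1) : ℝ) - θ r)) * ∑ k ∈ Finset.Ioc (θ r) (θ (r+1)), u k
      ≤ (1 / ((θ (r+1) : ℝ) - θ r)) * ∑ k ∈ Finset.Ioc (θ r) (θ (r+1)), v k + c := by
  have hpos : (0:ℝ) < (θ (r+1) : ℝ) - θ r := lt_of_lt_of_le one_pos (hr_one_le hmono r)
  have hsum : ∑ k ∈ Finset.Ioc (θ r) (θ (r+1)), u k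
      ≤ ∑ k ∈ Finset.Ioc (θ r) (θ (r+1)), v k + ((θ (r+1) : ℝ) - θ r) * c := by
    calc ∑ k ∈ Finset.Ioc (θ r) (θ (r+1)), u k
        ≤ ∑ k ∈ Finset.Ioc (θ r) (θ (r+1)), (v k + c) := Finset.sum_le_sum h
      _ = ∑ k ∈ Finset.Ioc (θ r) (θ (r+1)), v k + ((Finset.Ioc (θ r) (θ (r+1))).card : ℝ) * c := by
          rw [Finset.sum_add_distrib, Finset.sum_const, nsmul_eq_mul]
      _ = _ := by rw [hr_card hmono]
  have h1 : (0:ℝ) ≤ 1 / ((θ (r+1) : ℝ) - θ r) := by positivity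
  calc (1 / ((θ (r+1) : ℝ) - θ r)) * ∑ k ∈ Finset.Ioc (θ r) (θ (r+1)), u k
      ≤ (1 / ((θ (r+1) : ℝ) - θ r)) *
        (∑ k ∈ Finset.Ioc (θ r) (θ (r+1)), v k + ((θ (r+1) : ℝ) - θ r) * c) :=
        mul_le_mul_of_nonneg_left hsum h1
    _ = (1 / ((θ (r+1) : ℝ) - θ r)) * ∑ k ∈ Finset.Ioc (θ r) (θ (r+1)), v k + c := by
        field_simp

lemma le_avg (hmono : StrictMono θ) {u : ℕ → ℝ} {c : ℝ} {r : ℕ}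
    (h : ∀ k ∈ Finset.Ioc (θ r) (θ (r+1)), c ≤ u k) :
    c ≤ (1 / ((θ (r+1) : ℝ) - θ r)) * ∑ k ∈ Finset.Ioc (θ r) (θ (r+1)), u k := by
  have hpos : (0:ℝ) < (θ (r+1) : ℝ) - θ r := lt_of_lt_of_le one_pos (hr_one_le hmono r)
  have hsum : ((θ (r+1) : ℝ) - θ r) * c ≤ ∑ k ∈ Finset.Ioc (θ r) (θ (r+1)), u k := by
    calc ((θ (r+1) : ℝ) - θ r) * c = ((Finset.Ioc (θ r) (θ (r+1))).card : ℝ) * c := by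
          rw [hr_card hmono]
      _ = ∑ _k ∈ Finset.Ioc (θ r) (θ (r+1)), c := by rw [Finset.sum_const, nsmul_eq_mul]
      _ ≤ _ := Finset.sum_le_sum h
  have h1 : (0:ℝ) ≤ 1 / ((θ (r+1) : ℝ) - θ r) := by positivity
  have h2 := mul_le_mul_of_nonneg_left hsum h1
  calc c = (1 / ((θ (r+1) : ℝ) - θ r)) * (((θ (r+1) : ℝ) - θ r) * c) := by field_simp
    _ ≤ _ := h2

lemma avg_nonneg (hmono : StrictMono θ) {u : ℕ → ℝ} (hu : ∀ k, 0 ≤ u k) (r : ℕ) :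
    0 ≤ (1 / ((θ (r+1) : ℝ) - θ r)) * ∑ k ∈ Finset.Ioc (θ r) (θ (r+1)), u k := by
  have hpos : (0:ℝ) < (θ (r+1) : ℝ) - θ r := lt_of_lt_of_le one_pos (hr_one_le hmono r)
  have : (0:ℝ) ≤ ∑ k ∈ Finset.Ioc (θ r) (θ (r+1)), u k :=
    Finset.sum_nonneg fun k _ => hu k
  positivity
end Avg

lemma coeff_bound (u v : lp (fun _ : ℕ => ℝ) ⊤) (i : ℕ) : |u i - v i| ≤ ‖u - v‖ := by
  have h := lp.norm_apply_le_norm (by norm_num : (⊤:ENNReal) ≠ 0) (u - v) i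
  have h2 : (u - v) i = u i - v i := by rw [lp.coeFn_sub]; rfl
  rwa [h2, Real.norm_eq_abs] at h

lemma forward_complete {X : Type*} [NormedAddCommGroup X] [NormedSpace ℝ X] [CompleteSpace X]
    {θ : ℕ → ℕ} (hmono : StrictMono θ) (x : ℕ → X) (hx : WUCSeries x) :
    IsComplete (NthetaSummabilitySpace θ x) := by
  obtain ⟨H, hH0, hHb⟩ := wuc_unit_bound hx
  apply IsClosed.isComplete
  apply IsSeqClosed.isClosed
  intro A a hA hlim
  choose L hL using hA
  set P : (ℕ → ℝ) → ℕ → X := fun b n => ∑ i ∈ Finset.range n, b i • x i with hP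
  have bound1 : ∀ (u v : lp (fun _ : ℕ => ℝ) ⊤) (n : ℕ),
      ‖P u n - P v n‖ ≤ H * ‖u - v‖ := by
    intro u v n
    rw [hP]
    simp only
    rw [partial_diff]
    exact wuc_scaled hH0 hHb _ _ (fun i => coeff_bound u v i) n
  -- (L m) is Cauchy
  have hLdiff : ∀ m n : ℕ, ‖L m - L n‖ ≤ H * ‖A m - A n‖ := by
    intro m n
    have key : ∀ r : ℕ, ‖L m - L n‖ - H * ‖A m - A n‖ ≤
        (1 / ((θ (r+1) : ℝ) - θ r)) * ∑ k ∈ Finset.Ioc (θ r) (θ (r+1)),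
          ‖P (A m) k - L m‖
        + (1 / ((θ (r+1) : ℝ) - θ r)) * ∑ k ∈ Finset.Ioc (θ r) (θ (r+1)),
          ‖P (A n) k - L n‖ := by
      intro r
      have hsplit : (1 / ((θ (r+1) : ℝ) - θ r)) * ∑ k ∈ Finset.Ioc (θ r) (θ (r+1)),
            (‖P (A m) k - L m‖ + ‖P (A n) k - L n‖)
          = (1 / ((θ (r+1) : ℝ) - θ r)) * ∑ k ∈ Finset.Ioc (θ r) (θ (r+1)), ‖P (A m) k - L m‖
          + (1 / ((θ (r+1) : ℝ) - θ r)) * ∑ k ∈ Finset.Ioc (θ r) (θ (r+1)), ‖P (A n) k - L n‖ := by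
        rw [Finset.sum_add_distrib, mul_add]
      rw [← hsplit]
      apply le_avg hmono
      intro k _
      have t1 : ‖L m - L n‖ ≤ ‖P (A m) k - L m‖ + ‖P (A n) k - L n‖ + ‖P (A m) k - P (A n) k‖ := by
        have : L m - L n = (P (A m) k - L n) - (P (A m) k - L m) := by abel
        rw [this]
        calc ‖(P (A m) k - L n) - (P (A m) k - L m)‖
            ≤ ‖P (A m) k - L n‖ + ‖P (A m) k - L m‖ := norm_sub_le _ _
          _ ≤ (‖P (A m) k - P (A n) k‖ + ‖P (A n) k - L n‖) + ‖P (A m) k - L m‖ := by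
              have : P (A m) k - L n = (P (A m) k - P (A n) k) + (P (A n) k - L n) := by abel
              rw [this]
              exact add_le_add_left (norm_add_le _ _) _
          _ = _ := by ring
      have t2 := bound1 (A m) (A n) k
      linarith
    have htend : Tendsto (fun r => (1 / ((θ (r+1) : ℝ) - θ r)) * ∑ k ∈ Finset.Ioc (θ r) (θ (r+1)),
          ‖P (A m) k - L m‖
        + (1 / ((θ (r+1) : ℝ) - θ r)) * ∑ k ∈ Finset.Ioc (θ r) (θ (r+1)),
          ‖P (A n) k - L n‖) atTop (nhds 0) := by
      have := (hL m).add (hL n)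
      simpa using this
    have := ge_of_tendsto' htend key
    linarith
  have hLcauchy : CauchySeq L := by
    rw [Metric.cauchySeq_iff]
    intro ε hε
    have hAc : CauchySeq A := hlim.cauchySeq
    rw [Metric.cauchySeq_iff] at hAc
    obtain ⟨N, hN⟩ := hAc (ε / (H + 1)) (by positivity)
    refine ⟨N, fun m hm n hn => ?_⟩
    have h1 := hLdiff m n
    have h2 : dist (L m) (L n) = ‖L m - L n‖ := dist_eq_norm _ _
    have h3 : ‖A m - A n‖ = dist (A m) (A n) := (dist_eq_norm _ _).symm
    have h4 := hN m hm n hn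
    have h5 : H * ‖A m - A n‖ ≤ (H + 1) * dist (A m) (A n) := by
      rw [h3]
      have := dist_nonneg (x := A m) (y := A n)
      nlinarith
    have h6 : (H + 1) * dist (A m) (A n) < (H + 1) * (ε / (H + 1)) :=
      mul_lt_mul_of_pos_left h4 (by positivity)
    have h7 : (H + 1) * (ε / (H + 1)) = ε := by field_simp
    rw [h2]; linarith
  obtain ⟨M, hM⟩ := cauchySeq_tendsto_of_complete hLcauchy
  refine ⟨M, ?_⟩
  rw [NthetaSummable, Metric.tendsto_atTop]
  intro ε hε
  -- choose m
  have hMev := (Metric.tendsto_atTop.mp hM) (ε / 4) (by positivity)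
  have hAev := (Metric.tendsto_atTop.mp hlim) (ε / (4 * (H + 1))) (by positivity)
  obtain ⟨m1, hm1⟩ := hMev
  obtain ⟨m2, hm2⟩ := hAev
  set m := max m1 m2 with hm
  have hLM : ‖L m - M‖ < ε / 4 := by
    have := hm1 m (le_max_left _ _)
    rwa [dist_eq_norm] at this
  have hAa : H * ‖(a : lp (fun _ : ℕ => ℝ) ⊤) - A m‖ < ε / 4 := by
    have := hm2 m (le_max_right _ _)
    rw [dist_eq_norm] at this
    have hn : ‖a - A m‖ = ‖A m - a‖ := norm_sub_rev _ _
    have h5 : H * ‖a - A m‖ ≤ (H + 1) * ‖A m - a‖ := by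
      rw [hn]
      have := norm_nonneg (A m - a)
      nlinarith
    have h6 : (H + 1) * ‖A m - a‖ < (H + 1) * (ε / (4 * (H + 1))) :=
      mul_lt_mul_of_pos_left this (by positivity)
    have h7 : (H + 1) * (ε / (4 * (H + 1))) = ε / 4 := by field_simp
    linarith
  obtain ⟨N, hN⟩ := (Metric.tendsto_atTop.mp (hL m)) (ε / 4) (by positivity)
  refine ⟨N, fun r hr => ?_⟩
  have havg : (1 / ((θ (r+1) : ℝ) - θ r)) * ∑ k ∈ Finset.Ioc (θ r) (θ (r+1)), ‖P a k - M‖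
      ≤ (1 / ((θ (r+1) : ℝ) - θ r)) * ∑ k ∈ Finset.Ioc (θ r) (θ (r+1)), ‖P (A m) k - L m‖
        + (‖L m - M‖ + H * ‖a - A m‖) := by
    apply avg_le_avg_add hmono
    intro k _
    have t1 : P a k - M = (P (A m) k - L m) + (L m - M) + (P a k - P (A m) k) := by abel
    calc ‖P a k - M‖ = ‖(P (A m) k - L m) + (L m - M) + (P a k - P (A m) k)‖ := by rw [t1]
      _ ≤ ‖(P (A m) k - L m) + (L m - M)‖ + ‖P a k - P (A m) k‖ := norm_add_le _ _
      _ ≤ (‖P (A m) k - L m‖ + ‖L m - M‖) + H * ‖a - A m‖ :=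
          add_le_add (norm_add_le _ _) (bound1 a (A m) k)
      _ = ‖P (A m) k - L m‖ + (‖L m - M‖ + H * ‖a - A m‖) := by ring
  have hNr := hN r hr
  rw [Real.dist_eq, sub_zero] at hNr ⊢
  have hnn1 : 0 ≤ (1 / ((θ (r+1) : ℝ) - θ r)) * ∑ k ∈ Finset.Ioc (θ r) (θ (r+1)), ‖P a k - M‖ :=
    avg_nonneg hmono (fun k => norm_nonneg _) r
  have hnn2 : 0 ≤ (1 / ((θ (r+1) : ℝ) - θ r)) * ∑ k ∈ Finset.Ioc (θ r) (θ (r+1)), ‖P (A m) k - L m‖ :=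
    avg_nonneg hmono (fun k => norm_nonneg _) r
  rw [abs_of_nonneg hnn1]
  rw [abs_of_nonneg hnn2] at hNr
  calc (1 / ((θ (r+1) : ℝ) - θ r)) * ∑ k ∈ Finset.Ioc (θ r) (θ (r+1)), ‖P a k - M‖
      ≤ (1 / ((θ (r+1) : ℝ) - θ r)) * ∑ k ∈ Finset.Ioc (θ r) (θ (r+1)), ‖P (A m) k - L m‖
        + (‖L m - M‖ + H * ‖a - A m‖) := havg
    _ < ε / 4 + (ε / 4 + ε / 4) := by
        apply add_lt_add hNr
        exact add_lt_add hLM hAa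
    _ < ε := by linarith

lemma backward_complete {X : Type*} [NormedAddCommGroup X] [NormedSpace ℝ X]
    {θ : ℕ → ℕ} (hmono : StrictMono θ)
    (h : ∀ x : ℕ → X, WUCSeries x → IsComplete (NthetaSummabilitySpace θ x)) :
    CompleteSpace X := by
  by_contra hX
  have hne : ¬ ∀ z : Completion X, z ∈ Set.range ((↑) : X → Completion X) := by
    intro hall
    apply hX
    have hiso : Isometry ((↑) : X → Completion X) := Completion.coe_isometry
    have hemb : IsUniformEmbedding ((↑) : X → Completion X) := hiso.isUniformEmbedding
    exact (hemb.isUniformInducing.completeSpace_congr fun z => hall z).mpr inferInstance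
  push_neg at hne
  obtain ⟨z, hz⟩ := hne
  have hpex : ∀ n : ℕ, ∃ q : X, dist z (q : Completion X) < (1/4:ℝ)^(n+1) :=
    fun n => (Metric.denseRange_iff.mp Completion.denseRange_coe) z _ (by positivity)
  choose p hp using hpex
  set y : ℕ → X := fun n => Nat.rec (p 0) (fun k _ => p (k+1) - p k) n with hy
  have hys : ∀ k, y (k+1) = p (k+1) - p k := fun k => rfl
  have hy0 : y 0 = p 0 := rfl
  set T : ℕ → X := fun n => ∑ i ∈ Finset.range n, y i with hTdef
  have hT : ∀ n, T (n+1) = p n := by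
    intro n
    induction n with
    | zero => simp [hTdef, hy0]
    | succ k ih =>
        have h1 : T (k+1+1) = T (k+1) + y (k+1) := by
          rw [hTdef]; simp [Finset.sum_range_succ]
        rw [h1, ih, hys]
        abel
  have hyb : ∀ k, ‖y (k+1)‖ ≤ 2 * (1/4:ℝ)^(k+1) := by
    intro k
    rw [hys k]
    have hc : ‖p (k+1) - p k‖ = ‖((p (k+1) : Completion X)) - (p k : Completion X)‖ := by
      rw [← Completion.coe_sub, Completion.norm_coe]
    rw [hc]
    have h1 : ‖(p (k+1) : Completion X) - (p k : Completion X)‖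
        ≤ dist (p (k+1) : Completion X) z + dist z (p k : Completion X) := by
      rw [← dist_eq_norm]
      exact dist_triangle _ _ _
    have h2 : dist ((p (k+1) : Completion X)) z < (1/4:ℝ)^(k+2) := by
      rw [dist_comm]; exact hp (k+1)
    have h3 : dist z ((p k : Completion X)) < (1/4:ℝ)^(k+1) := hp k
    have h4 : (1/4:ℝ)^(k+2) ≤ (1/4)^(k+1) :=
      pow_le_pow_of_le_one (by norm_num) (by norm_num) (by omega)
    linarith
  set x : ℕ → X := fun n => (2:ℝ)^n • y n with hxdef
  have hxb : ∀ k, ‖x (k+1)‖ ≤ 2 * (1/2:ℝ)^(k+1) := by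
    intro k
    rw [hxdef]
    simp only
    rw [norm_smul, Real.norm_eq_abs, abs_of_pos (by positivity : (0:ℝ) < 2^(k+1))]
    have hb := hyb k
    have hpow : (2:ℝ)^(k+1) * (1/4)^(k+1) = (1/2)^(k+1) := by
      rw [← mul_pow]; norm_num
    calc (2:ℝ)^(k+1) * ‖y (k+1)‖ ≤ (2:ℝ)^(k+1) * (2 * (1/4)^(k+1)) :=
          mul_le_mul_of_nonneg_left hb (by positivity)
      _ = 2 * ((2:ℝ)^(k+1) * (1/4)^(k+1)) := by ring
      _ = 2 * (1/2)^(k+1) := by rw [hpow]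
  have hgeo : Summable (fun n : ℕ => 2 * (1/2:ℝ)^n) :=
    (summable_geometric_of_lt_one (by norm_num) (by norm_num)).mul_left 2
  have hsx : Summable (fun n => ‖x n‖) := by
    rw [← summable_nat_add_iff 1]
    exact Summable.of_nonneg_of_le (fun n => norm_nonneg _) (fun n => hxb n)
      ((summable_nat_add_iff 1).mpr hgeo)
  have hwuc : WUCSeries x := by
    intro f
    apply Summable.of_nonneg_of_le (fun i => abs_nonneg _) (fun i => ?_) (hsx.mul_left ‖f‖)
    have := f.le_opNorm (x i)
    rwa [Real.norm_eq_abs] at this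
  set a : ℕ → ℝ := fun n => (1/2:ℝ)^n with hadef
  have habd : ∀ i, ‖a i‖ ≤ 1 := by
    intro i
    rw [hadef, Real.norm_eq_abs, abs_of_pos (by positivity)]
    exact pow_le_one₀ (by norm_num) (by norm_num)
  have hamem : Memℓp a ⊤ := memℓp_infty ⟨1, by rintro w ⟨i, rfl⟩; exact habd i⟩
  set ae : lp (fun _ : ℕ => ℝ) ⊤ := ⟨a, hamem⟩ with haedef
  have hcollapse : ∀ i, a i • x i = y i := by
    intro i
    rw [hadef, hxdef]
    simp only
    rw [smul_smul, ← mul_pow]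
    norm_num
  have hPsum : ∀ n, ∑ i ∈ Finset.range n, (ae : ℕ → ℝ) i • x i = T n := by
    intro n
    rw [hTdef]
    exact Finset.sum_congr rfl fun i _ => hcollapse i
  -- ae is not in the summability space
  have han : ae ∉ NthetaSummabilitySpace θ x := by
    rintro ⟨Lx, hLx⟩
    have hLx' : Tendsto (fun r => (1 / ((θ (r+1) : ℝ) - θ r)) *
        ∑ k ∈ Finset.Ioc (θ r) (θ (r+1)), ‖T k - Lx‖) atTop (nhds 0) := by
      apply hLx.congr
      intro r
      congr 1
      refine Finset.sum_congr rfl fun k _ => ?_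
      show ‖(∑ i ∈ Finset.range k, (ae : ℕ → ℝ) i • x i) - Lx‖ = _
      rw [hPsum k]
    have hd : dist z (Lx : Completion X) ≤ 0 := by
      have key : ∀ ε > (0:ℝ), dist z (Lx : Completion X) ≤ 0 + ε := by
        intro ε hε
        obtain ⟨N, hN⟩ := exists_pow_lt_of_lt_one hε (by norm_num : (1/4:ℝ) < 1)
        have hev : ∀ᶠ r in atTop, dist z (Lx : Completion X) - ε ≤
            (1 / ((θ (r+1) : ℝ) - θ r)) * ∑ k ∈ Finset.Ioc (θ r) (θ (r+1)), ‖T k - Lx‖ := by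
          filter_upwards [eventually_ge_atTop N] with r hrN
          apply le_avg hmono
          intro k hk
          rw [Finset.mem_Ioc] at hk
          have hkN : N + 1 ≤ k := by
            have : r ≤ θ r := hmono.le_apply
            omega
          -- dist (T k) z is small
          have hksub : k - 1 + 1 = k := by omega
          have hdk : dist ((T k : X) : Completion X) z < ε := by
            have h5 := hp (k - 1)
            rw [← hT (k-1), dist_comm, hksub] at h5
            have h6 : (1/4:ℝ)^k ≤ (1/4)^N :=
              pow_le_pow_of_le_one (by norm_num) (by norm_num) (by omega)
            calc dist ((T k : X) : Completion X) z < (1/4:ℝ)^k := h5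
              _ ≤ (1/4)^N := h6
              _ < ε := hN
          have htri : dist z (Lx : Completion X) ≤
              dist z ((T k : X) : Completion X) + dist ((T k : X) : Completion X) (Lx : Completion X) :=
            dist_triangle _ _ _
          have hnn : dist ((T k : X) : Completion X) (Lx : Completion X) = ‖T k - Lx‖ := by
            rw [dist_eq_norm, ← Completion.coe_sub, Completion.norm_coe]
          rw [dist_comm] at hdk
          rw [hnn] at htri
          linarith
        have := ge_of_tendsto hLx' hev
        linarith
      linarith [le_of_forall_pos_le_add key]
    have hdz : z = (Lx : Completion X) := by
      have := dist_nonneg (x := z) (y := (Lx : Completion X))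
      have h0 : dist z (Lx : Completion X) = 0 := le_antisymm hd this
      exact dist_eq_zero.mp h0
    exact hz ⟨Lx, hdz.symm⟩
  -- approximating sequences
  have hAmem : ∀ m : ℕ, Memℓp (fun n => if n < m then a n else 0) (⊤ : ENNReal) := by
    intro m
    apply memℓp_infty
    refine ⟨1, ?_⟩
    rintro w ⟨i, rfl⟩
    by_cases hi : i < m
    · simp only [hi, if_true]
      exact habd i
    · simp [hi]
  set A : ℕ → lp (fun _ : ℕ => ℝ) ⊤ := fun m => ⟨fun n => if n < m then a n else 0, hAmem m⟩
    with hAdef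
  have hAS : ∀ m, A m ∈ NthetaSummabilitySpace θ x := by
    intro m
    refine ⟨T m, ?_⟩
    have heq : (fun r => (1 / ((θ (r+1):ℝ) - θ r)) *
        ∑ k ∈ Finset.Ioc (θ r) (θ (r+1)),
          ‖(∑ i ∈ Finset.range k, (A m : ℕ → ℝ) i • x i) - T m‖) =ᶠ[atTop]
        (fun _ => (0:ℝ)) := by
      filter_upwards [eventually_ge_atTop m] with r hrm
      have hsum0 : ∑ k ∈ Finset.Ioc (θ r) (θ (r+1)),
          ‖(∑ i ∈ Finset.range k, (A m : ℕ → ℝ) i • x i) - T m‖ = 0 := by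
        apply Finset.sum_eq_zero
        intro k hk
        rw [Finset.mem_Ioc] at hk
        have hmk : m ≤ k := by
          have : r ≤ θ r := hmono.le_apply
          omega
        have hcoe : ∀ i, (A m : ℕ → ℝ) i = if i < m then a i else 0 := fun i => rfl
        have hps : ∑ i ∈ Finset.range k, (A m : ℕ → ℝ) i • x i = T m := by
          have hsub : Finset.range m ⊆ Finset.range k := Finset.range_subset_range.mpr hmk
          have h1 : ∑ i ∈ Finset.range m, (A m : ℕ → ℝ) i • x i
              = ∑ i ∈ Finset.range k, (A m : ℕ → ℝ) i • x i := by
            apply Finset.sum_subset hsub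
            intro i _ hin
            rw [Finset.mem_range, not_lt] at hin
            rw [hcoe i, if_neg (by omega), zero_smul]
          rw [← h1, hTdef]
          refine Finset.sum_congr rfl fun i hi => ?_
          rw [Finset.mem_range] at hi
          rw [hcoe i, if_pos hi, hcollapse i]
        rw [hps, sub_self, norm_zero]
      rw [hsum0, mul_zero]
    exact Tendsto.congr' heq.symm tendsto_const_nhds
  have hbound : ∀ m, ‖A m - ae‖ ≤ (1/2:ℝ)^m := by
    intro m
    apply lp.norm_le_of_forall_le (by positivity)
    intro i
    have hcoe2 : (A m - ae : lp (fun _ : ℕ => ℝ) ⊤) i = (if i < m then a i else 0) - a i := by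
      rw [lp.coeFn_sub]; rfl
    rw [hcoe2]
    by_cases hi : i < m
    · rw [if_pos hi, sub_self, norm_zero]
      positivity
    · rw [if_neg hi, zero_sub, norm_neg]
      have ha' : a i = (1/2:ℝ)^i := rfl
      rw [ha', Real.norm_eq_abs, abs_of_pos (by positivity)]
      exact pow_le_pow_of_le_one (by norm_num) (by norm_num) (le_of_not_gt hi)
  have hAtend : Tendsto A atTop (nhds ae) := by
    rw [tendsto_iff_norm_sub_tendsto_zero]
    apply squeeze_zero (fun m => norm_nonneg _) hbound
    exact tendsto_pow_atTop_nhds_zero_of_lt_one (by norm_num) (by norm_num)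
  have hC := (h x hwuc).isClosed
  exact han (hC.mem_of_tendsto hAtend (Filter.Eventually.of_forall hAS))

/-- A normed space is complete iff the `N_θ`-summability space of every wuC series is complete. -/
theorem completeSpace_iff_nthetaSummabilitySpace_complete {X : Type*} [NormedAddCommGroup X]
    [NormedSpace ℝ X] (θ : ℕ → ℕ) (hθ : IsLacunary θ) :
    CompleteSpace X ↔
      ∀ x : ℕ → X, WUCSeries x → IsComplete (NthetaSummabilitySpace θ x) := by
  obtain ⟨h0, hmono, hh⟩ := hθ
  constructor
  · intro hX x hx
    haveI := hX
    exact forward_complete hmono x hx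
  · intro hcc
    exact backward_complete hmono hcc
end

section
/- Let X be a real normed space, θ = (k_r) a lacunary sequence, (S_N) a sequence in X, and x** an element of the bidual X** that does not belong to the image of X under the canonical embedding J : X → X**. Suppose that y*(S_N) → x**(y*) as N → ∞ for every y* ∈ X*. Then (S_N) is not N_θ-summable to any L ∈ X. -/
open Filter Finset
open scoped Classical

open NormedSpace in
/-- If `y* (S N) → x** (y*)` for every `y* ∈ X*`, where `x**` is an element of the bidual
not in the canonical image of `X`, then `(S N)` is not `N_θ`-summable to any `L ∈ X`. -/
theorem not_nthetaSummable_of_weakStar_tendsto_bidual {X : Type*} [NormedAddCommGroup X]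
    [NormedSpace ℝ X] (θ : ℕ → ℕ) (hθ : IsLacunary θ) (S : ℕ → X)
    (xss : StrongDual ℝ (StrongDual ℝ X)) (hxss : xss ∉ Set.range (inclusionInDoubleDual ℝ X))
    (hconv : ∀ y : StrongDual ℝ X, Tendsto (fun N => y (S N)) atTop (nhds (xss y))) :
    ∀ L : X, ¬ NthetaSummable θ S L := by
  intro L hsum
  obtain ⟨hθ0, hmono, htend⟩ := hθ
  -- intervals are nonempty
  have hne : ∀ r : ℕ, (Finset.Ioc (θ r) (θ (r + 1))).Nonempty := fun r =>
    ⟨θ (r + 1), Finset.mem_Ioc.2 ⟨hmono (Nat.lt_succ_self r), le_refl _⟩⟩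
  -- choose a minimizer in each interval
  choose n hn hmin using fun r =>
    (Finset.Ioc (θ r) (θ (r + 1))).exists_min_image (fun k => ‖S k - L‖) (hne r)
  have hcardpos : ∀ r : ℕ, (0 : ℝ) < (θ (r + 1) - θ r : ℕ) := fun r => by
    have := hmono (Nat.lt_succ_self r)
    exact_mod_cast Nat.sub_pos_of_lt this
  -- the minimum is bounded by the average
  have hbound : ∀ r : ℕ, ‖S (n r) - L‖ ≤
      (1 / (θ (r + 1) - θ r : ℝ)) * ∑ k ∈ Finset.Ioc (θ r) (θ (r + 1)), ‖S k - L‖ := by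
    intro r
    have hcard : ((Finset.Ioc (θ r) (θ (r + 1))).card : ℝ) = (θ (r + 1) - θ r : ℕ) := by
      rw [Nat.card_Ioc]
    have hsum' : ((Finset.Ioc (θ r) (θ (r + 1))).card : ℝ) * ‖S (n r) - L‖ ≤
        ∑ k ∈ Finset.Ioc (θ r) (θ (r + 1)), ‖S k - L‖ := by
      have := Finset.card_nsmul_le_sum (Finset.Ioc (θ r) (θ (r + 1)))
        (fun k => ‖S k - L‖) (‖S (n r) - L‖) (fun k hk => hmin r k hk)
      simpa [nsmul_eq_mul] using this
    rw [hcard] at hsum'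
    have h0 := hcardpos r
    have hcast : ((θ (r + 1) - θ r : ℕ) : ℝ) = (θ (r + 1) : ℝ) - (θ r : ℝ) :=
      Nat.cast_sub (hmono (Nat.lt_succ_self r)).le
    rw [hcast] at hsum' h0
    rw [one_div, inv_mul_eq_div, le_div_iff₀ h0]
    linarith [hsum']
  -- hence ‖S (n r) - L‖ → 0
  have hto0 : Tendsto (fun r => ‖S (n r) - L‖) atTop (nhds 0) :=
    squeeze_zero (fun r => norm_nonneg _) hbound hsum
  have hSL : Tendsto (fun r => S (n r)) atTop (nhds L) := by
    rw [tendsto_iff_norm_sub_tendsto_zero]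
    exact hto0
  -- n tends to atTop
  have hnat : Tendsto n atTop atTop := by
    apply tendsto_atTop_mono (fun r => (Finset.mem_Ioc.1 (hn r)).1.le)
    exact hmono.tendsto_atTop
  -- conclude xss = J L
  apply hxss
  refine ⟨L, ?_⟩
  ext y
  have h1 : Tendsto (fun r => y (S (n r))) atTop (nhds (xss y)) :=
    (hconv y).comp hnat
  have h2 : Tendsto (fun r => y (S (n r))) atTop (nhds (y L)) :=
    (y.continuous.tendsto L).comp hSL
  exact tendsto_nhds_unique h2 h1
end
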